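/- Let (X,d) be a compact metric space, ε > 0, F ⊆ X an ε-separated set of cardinality C, and μ the uniform (equidistributed) probability measure on F. Then for every Borel probability measure ν on X whose support has cardinality C_ν < C, the 1-Wasserstein distance satisfies W₁(μ, ν) ≥ ((C − C_ν + 1)/C) · (ε/2). -/

import Mathlib

open MeasureTheory ENNReal

variable {X : Type*}

/-- The 1-Wasserstein distance, defined as the infimum over couplings of the
expected distance. -/
noncomputable def W1 [MetricSpace X] [MeasurableSpace X] (μ ν : Measure X) : ℝ :=
  sInf {c | ∃ π : Measure (X × X), π.map Prod.fst = μ ∧ π.map Prod.snd = ν ∧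
      c = ∫ p : X × X, dist p.1 p.2 ∂π}

/-- The uniform (equidistributed) probability measure on a finite set. -/
noncomputable def uniformOn [MeasurableSpace X] (F : Finset X) : Measure X :=
  ((F.card : ℝ≥0∞)⁻¹) • ∑ x ∈ F, Measure.dirac x

lemma sum_transport_lower {X : Type*} (s : Finset X) (ε Cr : ℝ) (hε : 0 < ε) (hC : 1 ≤ Cr)
    (n v r : X → ℝ)
    (hn0 : ∀ y ∈ s, 0 ≤ n y) (hn : ∀ y ∈ s, n y ≤ ε/2)
    (hv0 : ∀ y ∈ s, 0 ≤ v y)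
    (hr0 : ∀ y ∈ s, 0 ≤ r y)
    (hrv : ∀ y ∈ s, v y - 1/Cr ≤ r y)
    (hv : ∑ y ∈ s, v y = 1)
    (hk : (s.card : ℝ) + 1 ≤ Cr) :
    ((Cr - s.card + 1) / Cr) * (ε/2) ≤ ∑ y ∈ s, (n y * v y + (ε - 2 * n y) * r y) := by
  have hCpos : (0:ℝ) < Cr := lt_of_lt_of_le one_pos hC
  set e : X → ℝ := fun y => max (v y - 1/Cr) 0 with he
  set m : X → ℝ := fun y => min (e y) (1/Cr) with hm
  have he0 : ∀ y ∈ s, 0 ≤ e y := fun y _ => le_max_right _ _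
  have hm0 : ∀ y ∈ s, 0 ≤ m y := fun y hy => le_min (he0 y hy) (by positivity)
  have hme : ∀ y ∈ s, m y ≤ e y := fun y _ => min_le_left _ _
  have hre : ∀ y ∈ s, e y ≤ r y := fun y hy => max_le (hrv y hy) (hr0 y hy)
  have hvem : ∀ y ∈ s, e y + m y ≤ v y := by
    intro y hy
    rcases le_or_gt (v y - 1/Cr) 0 with h | h
    · have : e y = 0 := max_eq_right h
      have hm' : m y ≤ 0 := by rw [hm]; simp only [this]; exact min_le_left _ _
      have := hv0 y hy
      simp only [he, max_eq_right h] at *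
      linarith
    · have hey : e y = v y - 1/Cr := max_eq_left h.le
      have : m y ≤ 1/Cr := min_le_right _ _
      linarith
  have hterm : ∀ y ∈ s, (ε/2) * (e y + m y) ≤ n y * v y + (ε - 2 * n y) * r y := by
    intro y hy
    have h1 := hn0 y hy; have h2 := hn y hy; have h3 := hre y hy
    have h4 := hvem y hy; have h5 := hme y hy; have h6 := hm0 y hy
    have h7 := he0 y hy
    nlinarith [mul_nonneg h1 h6]
  have hsum : (ε/2) * (∑ y ∈ s, e y + ∑ y ∈ s, m y)
      ≤ ∑ y ∈ s, (n y * v y + (ε - 2 * n y) * r y) := by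
    calc (ε/2) * (∑ y ∈ s, e y + ∑ y ∈ s, m y)
        = ∑ y ∈ s, (ε/2) * (e y + m y) := by
          rw [← Finset.sum_add_distrib, Finset.mul_sum]
      _ ≤ _ := Finset.sum_le_sum hterm
  have hse : 1 - s.card / Cr ≤ ∑ y ∈ s, e y := by
    have : ∑ y ∈ s, (v y - 1/Cr) ≤ ∑ y ∈ s, e y :=
      Finset.sum_le_sum fun y _ => le_max_left _ _
    rw [Finset.sum_sub_distrib, hv] at this
    simpa [div_eq_mul_inv] using this
  have hsm : 1/Cr ≤ ∑ y ∈ s, m y := by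
    by_cases hex : ∃ y ∈ s, 1/Cr ≤ e y
    · obtain ⟨y0, hy0, hy0e⟩ := hex
      have : m y0 = 1/Cr := min_eq_right hy0e
      calc (1/Cr) = m y0 := this.symm
        _ ≤ ∑ y ∈ s, m y := Finset.single_le_sum hm0 hy0
    · push_neg at hex
      have : ∑ y ∈ s, m y = ∑ y ∈ s, e y :=
        Finset.sum_congr rfl fun y hy => min_eq_left (hex y hy).le
      rw [this]
      have h1 : (s.card : ℝ) / Cr + 1/Cr ≤ 1 := by
        rw [← add_div, div_le_one hCpos]; linarith
      linarith
  calc ((Cr - s.card + 1) / Cr) * (ε/2)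
      = (ε/2) * ((1 - s.card/Cr) + 1/Cr) := by field_simp
    _ ≤ (ε/2) * (∑ y ∈ s, e y + ∑ y ∈ s, m y) := by
        apply mul_le_mul_of_nonneg_left (by linarith) (by linarith)
    _ ≤ _ := hsum

lemma uniformOn_apply [MeasurableSpace X] (F : Finset X) {A : Set X} (hA : MeasurableSet A) :
    uniformOn F A = (F.card : ℝ≥0∞)⁻¹ * ∑ x ∈ F, A.indicator 1 x := by
  rw [uniformOn, Measure.smul_apply, Measure.finset_sum_apply, smul_eq_mul]
  congr 1
  exact Finset.sum_congr rfl (fun x _ => Measure.dirac_apply' x hA)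

lemma uniformOn_compl [MeasurableSpace X] [MeasurableSingletonClass X] (F : Finset X) :
    uniformOn F (↑F : Set X)ᶜ = 0 := by
  rw [uniformOn_apply F (F.finite_toSet.measurableSet.compl)]
  rw [Finset.sum_congr rfl (fun x hx => Set.indicator_of_notMem (by simpa using hx) 1)]
  simp

lemma uniformOn_univ [MeasurableSpace X] (F : Finset X) (hF : 0 < F.card) :
    uniformOn F Set.univ = 1 := by
  rw [uniformOn_apply F MeasurableSet.univ]
  rw [Finset.sum_congr rfl (fun x _ => Set.indicator_of_mem (Set.mem_univ x) 1)]
  simp only [Pi.one_apply, Finset.sum_const, nsmul_eq_mul, mul_one]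
  exact ENNReal.inv_mul_cancel (by exact_mod_cast hF.ne') (natCast_ne_top _)

lemma uniformOn_le_of_subsingleton [MeasurableSpace X] (F : Finset X) {A : Set X}
    (hA : MeasurableSet A) (h : ∀ x ∈ F, ∀ y ∈ F, x ∈ A → y ∈ A → x = y) :
    uniformOn F A ≤ (F.card : ℝ≥0∞)⁻¹ := by
  classical
  rw [uniformOn_apply F hA]
  rcases Classical.em (∃ x ∈ F, x ∈ A) with ⟨x0, hx0, hx0A⟩ | hno
  · have : ∑ x ∈ F, A.indicator (1 : X → ℝ≥0∞) x ≤ 1 := by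
      have : ∀ x ∈ F, A.indicator (1 : X → ℝ≥0∞) x ≤ ({x0} : Set X).indicator 1 x := by
        intro x hx
        rcases Classical.em (x ∈ A) with hxA | hxA
        · rw [Set.indicator_of_mem hxA, Set.indicator_of_mem (by simp [h x hx x0 hx0 hxA hx0A])]
        · simp [Set.indicator_of_notMem hxA]
      calc ∑ x ∈ F, A.indicator (1 : X → ℝ≥0∞) x
          ≤ ∑ x ∈ F, ({x0} : Set X).indicator (1: X → ℝ≥0∞) x := Finset.sum_le_sum this
        _ ≤ 1 := by
            have : ∀ x ∈ F, ({x0} : Set X).indicator (1: X → ℝ≥0∞) x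
                = if x = x0 then 1 else 0 := by
              intro x _
              simp [Set.indicator_apply]
            rw [Finset.sum_congr rfl this, Finset.sum_ite_eq' F x0 (fun _ => (1:ℝ≥0∞))]
            split <;> simp
    calc (F.card : ℝ≥0∞)⁻¹ * ∑ x ∈ F, A.indicator 1 x ≤ (F.card : ℝ≥0∞)⁻¹ * 1 :=
          mul_le_mul_right this _
      _ = _ := mul_one _
  · push_neg at hno
    rw [Finset.sum_congr rfl (fun x hx => Set.indicator_of_notMem (hno x hx) 1)]
    simp

/-- Lower bound for the Wasserstein distance between the uniform measure on an
`ε`-separated set of cardinality `C` and any measure supported on `C_ν < C` points. -/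
theorem W1_ge_of_separated [MetricSpace X] [CompactSpace X]
    [MeasurableSpace X] [BorelSpace X]
    (ε : ℝ) (hε : 0 < ε) (F : Finset X)
    (hsep : ∀ x ∈ F, ∀ y ∈ F, x ≠ y → ε ≤ dist x y)
    (ν : Measure X) [IsProbabilityMeasure ν]
    (s : Finset X) (hνs : ν (↑s : Set X)ᶜ = 0) (hcard : s.card < F.card) :
    ((F.card - s.card + 1 : ℝ) / F.card) * (ε / 2) ≤ W1 (uniformOn F) ν := by
  classical
  have hFc : 0 < F.card := lt_of_le_of_lt (Nat.zero_le _) hcard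
  have hFne : (↑F : Set X).Nonempty := by
    obtain ⟨x, hx⟩ := Finset.card_pos.mp hFc; exact ⟨x, hx⟩
  have hμprob : IsProbabilityMeasure (uniformOn F) := ⟨uniformOn_univ F hFc⟩
  have hFmeas : MeasurableSet (↑F : Set X) := F.finite_toSet.measurableSet
  have hsmeas : MeasurableSet (↑s : Set X) := s.finite_toSet.measurableSet
  apply le_csInf
  · refine ⟨_, (uniformOn F).prod ν, ?_, ?_, rfl⟩
    · rw [Measure.map_fst_prod]; simp
    · rw [Measure.map_snd_prod]; simp [hμprob.measure_univ]
  rintro c ⟨π, hπ1, hπ2, rfl⟩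
  -- π is a probability measure
  haveI hπprob : IsProbabilityMeasure π := by
    constructor
    have h1 : (π.map Prod.fst) Set.univ = 1 := by rw [hπ1]; exact uniformOn_univ F hFc
    rwa [Measure.map_apply measurable_fst MeasurableSet.univ, Set.preimage_univ] at h1
  -- null sets
  have hnull1 : π (Prod.fst ⁻¹' (↑F : Set X)ᶜ) = 0 := by
    rw [← Measure.map_apply measurable_fst hFmeas.compl, hπ1]
    exact uniformOn_compl F
  have hnull2 : π (Prod.snd ⁻¹' (↑s : Set X)ᶜ) = 0 := by
    rw [← Measure.map_apply measurable_snd hsmeas.compl, hπ2]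
    exact hνs
  -- definitions
  set n : X → ℝ := fun y => min (Metric.infDist y (↑F : Set X)) (ε/2) with hn_def
  set D : Set (X × X) := {p | ε/2 ≤ dist p.1 p.2} with hD_def
  have hD : MeasurableSet D :=
    (isClosed_le continuous_const (continuous_fst.dist continuous_snd)).measurableSet
  set Ay : X → Set (X × X) := fun y => Prod.snd ⁻¹' ({y} : Set X) with hAy_def
  have hAy : ∀ y, MeasurableSet (Ay y) := fun y => measurable_snd (measurableSet_singleton y)
  set u : X × X → ℝ := fun p => ∑ y ∈ s, ((Ay y).indicator (fun _ => n y) p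
      + ((Ay y) ∩ D).indicator (fun _ => ε - 2 * n y) p) with hu_def
  -- integrability
  have hint_term : ∀ y ∈ s, Integrable (fun p => (Ay y).indicator (fun _ => n y) p
      + ((Ay y) ∩ D).indicator (fun _ => ε - 2 * n y) p) π := fun y _ =>
    ((integrable_const _).indicator (hAy y)).add
      ((integrable_const _).indicator ((hAy y).inter hD))
  have hint_u : Integrable u π := integrable_finset_sum _ hint_term
  have hint_dist : Integrable (fun p : X × X => dist p.1 p.2) π := by
    apply Integrable.mono' (integrable_const (Metric.diam (Set.univ : Set X)))
    · exact (continuous_fst.dist continuous_snd).aestronglyMeasurable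
    · filter_upwards with p
      rw [Real.norm_of_nonneg dist_nonneg]
      exact Metric.dist_le_diam_of_mem isCompact_univ.isBounded trivial trivial
  -- a.e. membership
  have hae : ∀ᵐ p ∂π, p.1 ∈ (↑F : Set X) ∧ p.2 ∈ (↑s : Set X) := by
    rw [MeasureTheory.ae_iff]
    apply measure_mono_null _ (measure_union_null hnull1 hnull2)
    intro p hp
    simp only [Set.mem_setOf_eq, not_and_or] at hp
    rcases hp with h | h
    · exact Or.inl h
    · exact Or.inr h
  -- pointwise bound
  have hptw : ∀ᵐ p ∂π, u p ≤ dist p.1 p.2 := by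
    filter_upwards [hae] with p hp
    obtain ⟨hpF, hps⟩ := hp
    have hpF' : p.1 ∈ F := hpF
    have hps' : p.2 ∈ s := hps
    have hcollapse : u p = (Ay p.2).indicator (fun _ => n p.2) p
        + ((Ay p.2) ∩ D).indicator (fun _ => ε - 2 * n p.2) p := by
      rw [hu_def]
      apply Finset.sum_eq_single_of_mem p.2 hps'
      intro b _ hbne
      have h1 : p ∉ Ay b := by
        simp only [hAy_def, Set.mem_preimage, Set.mem_singleton_iff]
        exact fun h => hbne h.symm
      rw [Set.indicator_of_notMem h1, Set.indicator_of_notMem (fun h => h1 h.1), add_zero]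
    have hmem : p ∈ Ay p.2 := by simp [hAy_def]
    rw [hcollapse, Set.indicator_of_mem hmem]
    by_cases hpD : p ∈ D
    · rw [Set.indicator_of_mem (Set.mem_inter hmem hpD)]
      have hd : ε/2 ≤ dist p.1 p.2 := hpD
      rcases le_or_gt (ε/2) (Metric.infDist p.2 (↑F : Set X)) with h | h
      · have hne : n p.2 = ε/2 := min_eq_right h
        rw [hne]; linarith
      · have hne : n p.2 = Metric.infDist p.2 (↑F : Set X) := min_eq_left h.le
        obtain ⟨x0, hx0F, hx0d⟩ :=
          IsCompact.exists_infDist_eq_dist F.finite_toSet.isCompact hFne p.2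
        by_cases hxx : p.1 = x0
        · exfalso
          have hdd : dist p.1 p.2 = Metric.infDist p.2 (↑F : Set X) := by
            rw [hxx, dist_comm]; exact hx0d.symm
          linarith
        · have hsep' : ε ≤ dist p.1 x0 := hsep p.1 hpF' x0 hx0F hxx
          have htri : dist p.1 x0 ≤ dist p.1 p.2 + dist p.2 x0 := dist_triangle _ _ _
          have hdd : dist p.2 x0 = Metric.infDist p.2 (↑F : Set X) := hx0d.symm
          rw [hne]; linarith
    · rw [Set.indicator_of_notMem (fun h => hpD h.2), add_zero]
      have h1 : Metric.infDist p.2 (↑F : Set X) ≤ dist p.1 p.2 := by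
        rw [dist_comm]; exact Metric.infDist_le_dist_of_mem hpF
      calc n p.2 ≤ Metric.infDist p.2 (↑F : Set X) := min_le_left _ _
        _ ≤ dist p.1 p.2 := h1
  have hint : ∫ p, u p ∂π ≤ ∫ p : X × X, dist p.1 p.2 ∂π :=
    integral_mono_ae hint_u hint_dist hptw
  -- compute the integral of u
  set vE : X → ℝ := fun y => (π (Ay y)).toReal with hvE_def
  set rE : X → ℝ := fun y => (π (Ay y ∩ D)).toReal with hrE_def
  have hIu : ∫ p, u p ∂π = ∑ y ∈ s, (n y * vE y + (ε - 2 * n y) * rE y) := by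
    rw [hu_def, integral_finset_sum _ hint_term]
    apply Finset.sum_congr rfl
    intro y _
    rw [integral_add ((integrable_const _).indicator (hAy y))
      ((integrable_const _).indicator ((hAy y).inter hD))]
    rw [integral_indicator_const _ (hAy y), integral_indicator_const _ ((hAy y).inter hD)]
    simp only [smul_eq_mul, measureReal_def, hvE_def, hrE_def]
    ring
  -- apply the arithmetic lemma
  have harith := sum_transport_lower s ε (F.card : ℝ) hε (by exact_mod_cast hFc) n vE rE
    (fun y _ => le_min Metric.infDist_nonneg (by positivity))
    (fun y _ => min_le_right _ _)
    (fun y _ => ENNReal.toReal_nonneg)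
    (fun y _ => ENNReal.toReal_nonneg)
    ?_ ?_ (by exact_mod_cast hcard)
  · calc ((F.card - s.card + 1 : ℝ) / F.card) * (ε / 2)
        ≤ ∑ y ∈ s, (n y * vE y + (ε - 2 * n y) * rE y) := harith
      _ = ∫ p, u p ∂π := hIu.symm
      _ ≤ _ := hint
  -- hrv
  · intro y _
    have hsub : Ay y \ D ⊆ Prod.fst ⁻¹' Metric.ball y (ε/2) := by
      intro p hp
      obtain ⟨hp1, hp2⟩ := hp
      have h2 : p.2 = y := hp1
      have h3 : dist p.1 p.2 < ε/2 := lt_of_not_ge hp2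
      simp only [Set.mem_preimage, Metric.mem_ball]
      rw [← h2]; exact h3
    have hball : π (Prod.fst ⁻¹' Metric.ball y (ε/2)) ≤ (F.card : ℝ≥0∞)⁻¹ := by
      rw [← Measure.map_apply measurable_fst measurableSet_ball, hπ1]
      apply uniformOn_le_of_subsingleton F measurableSet_ball
      intro a ha b hb haB hbB
      by_contra hne
      have h1 : ε ≤ dist a b := hsep a ha b hb hne
      have h2 : dist a y < ε/2 := haB
      have h3 : dist b y < ε/2 := hbB
      have h4 : dist a b ≤ dist a y + dist y b := dist_triangle _ _ _
      rw [dist_comm y b] at h4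
      linarith
    have hsplit : π (Ay y) = π (Ay y ∩ D) + π (Ay y \ D) :=
      (measure_inter_add_diff _ hD).symm
    have hle : π (Ay y) ≤ π (Ay y ∩ D) + (F.card : ℝ≥0∞)⁻¹ := by
      rw [hsplit]
      exact add_le_add_right (le_trans (measure_mono hsub) hball) _
    have hfin : π (Ay y ∩ D) + (F.card : ℝ≥0∞)⁻¹ ≠ ⊤ :=
      ENNReal.add_ne_top.mpr ⟨measure_ne_top π _, ENNReal.inv_ne_top.mpr (by exact_mod_cast hFc.ne')⟩
    have := ENNReal.toReal_mono hfin hle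
    rw [ENNReal.toReal_add (measure_ne_top π _)
      (ENNReal.inv_ne_top.mpr (by exact_mod_cast hFc.ne'))] at this
    rw [ENNReal.toReal_inv] at this
    have hcast : ((F.card : ℝ≥0∞)).toReal = (F.card : ℝ) := by simp
    rw [hcast] at this
    rw [hvE_def, hrE_def]
    simp only [one_div]
    linarith
  -- hv : sum of vE = 1
  · have hdisj : (↑s : Set X).PairwiseDisjoint Ay := by
      intro a _ b _ hab
      simp only [Function.onFun, hAy_def]
      rw [Set.disjoint_left]
      intro p hpa hpb
      exact hab (hpa.symm.trans hpb)
    have hbu : Prod.snd ⁻¹' (↑s : Set X) = ⋃ y ∈ s, Ay y := by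
      ext p; simp [hAy_def]
    have h2 : ∑ y ∈ s, π (Ay y) = π (Prod.snd ⁻¹' (↑s : Set X)) := by
      rw [hbu, measure_biUnion_finset hdisj (fun y _ => hAy y)]
    have hν1 : ν (↑s : Set X) = 1 := prob_compl_eq_zero_iff hsmeas |>.mp hνs
    have h3 : π (Prod.snd ⁻¹' (↑s : Set X)) = 1 := by
      rw [← Measure.map_apply measurable_snd hsmeas, hπ2]; exact hν1
    have h4 : ∑ y ∈ s, (π (Ay y)).toReal = ((∑ y ∈ s, π (Ay y))).toReal :=
      (ENNReal.toReal_sum (fun y _ => measure_ne_top π _)).symm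
    rw [hvE_def]
    rw [h4, h2, h3, ENNReal.toReal_one]
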